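/- Fix finite sets Θ, 𝒳, 𝒴 and T ≥ 1. Let the model be given by input kernels q_t (pmfs on 𝒳 depending on the past data only, not on θ) and label kernels k_t, where k_t(· | ν, h_t) is a pmf on 𝒴 for each θ-value ν and each history h_t. Let π and π̃ be pmfs on Θ with π absolutely continuous with respect to π̃, and let the data (X_0, Y_1, …, X_{T−1}, Y_T) be generated with θ ∼ π and labels drawn from k_t(· | θ, H_t). For a prior ρ on Θ, let P̂^ρ_t(· | h_t) = ∑_ν ρ(ν | h_t) k_t(· | ν, h_t) denote the Bayes posterior predictive under prior ρ, where ρ(· | h_t) is the posterior of θ given h_t computed by Bayes' rule with prior ρ and the kernels k_s. Then (1/T)·∑_{t=0}^{T−1} E[ D_KL( P̂^π_t(·|H_t) ‖ P̂^{π̃}_t(·|H_t) ) ] ≤ D_KL(π ‖ π̃)/T, where the expectation is under the true (prior-π) law of the data. -/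

import Mathlib

/-!
Statement 3 (misspecified prior error bound): for a generative model with θ-independent input
kernels `q_t` and label kernels `k_t`, a true prior `π` and a misspecified prior `π̃` with
`π ≪ π̃`, the average expected KL divergence between the Bayes posterior predictives under the
two priors is at most `D_KL(π ‖ π̃)/T`.
-/

open scoped Classical ENNReal

noncomputable section

/-- KL divergence between pmfs on a finite set, valued in `[0,∞]`. -/
def klDivF {A : Type*} [Fintype A] (p q : A → ℝ) : ℝ≥0∞ :=
  if ∀ a, q a = 0 → p a = 0 then ENNReal.ofReal (∑ a, p a * Real.log (p a / q a)) else ⊤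

variable {Θ 𝒳 𝒴 : Type*} [Fintype Θ] [Fintype 𝒳] [Fintype 𝒴] {T : ℕ}

/-- The history `h_t = (x_{0:t}, y_{1:t})` read off from a full trajectory `(x, y)`. -/
def hist (t : Fin T) (x : Fin T → 𝒳) (y : Fin T → 𝒴) :
    (Fin ((t : ℕ) + 1) → 𝒳) × (Fin (t : ℕ) → 𝒴) :=
  (fun i => x (Fin.castLE t.isLt i), fun i => y (Fin.castLE (le_of_lt t.isLt) i))

/-- The past data `(x_{0:t-1}, y_{1:t})` strictly before the input `x_t`. -/
def past (t : Fin T) (x : Fin T → 𝒳) (y : Fin T → 𝒴) :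
    (Fin (t : ℕ) → 𝒳) × (Fin (t : ℕ) → 𝒴) :=
  (fun i => x (Fin.castLE (le_of_lt t.isLt) i), fun i => y (Fin.castLE (le_of_lt t.isLt) i))

/-- Likelihood of the labels `y_{1:t}` of the history `h_t` under parameter `ν`. -/
def partialLik (k : ∀ t : Fin T, Θ → ((Fin ((t : ℕ) + 1) → 𝒳) × (Fin (t : ℕ) → 𝒴)) → 𝒴 → ℝ)
    (t : Fin T) (ν : Θ) (x : Fin T → 𝒳) (y : Fin T → 𝒴) : ℝ :=
  ∏ s : Fin T, if (s : ℕ) < (t : ℕ) then k s ν (hist s x y) (y s) else 1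

/-- Bayes posterior of `θ` given the history `h_t`, under prior `ρ` and kernels `k`. -/
def post (k : ∀ t : Fin T, Θ → ((Fin ((t : ℕ) + 1) → 𝒳) × (Fin (t : ℕ) → 𝒴)) → 𝒴 → ℝ)
    (ρ : Θ → ℝ) (t : Fin T) (x : Fin T → 𝒳) (y : Fin T → 𝒴) (ν : Θ) : ℝ :=
  ρ ν * partialLik k t ν x y / ∑ ν', ρ ν' * partialLik k t ν' x y

/-- Bayes posterior predictive `P̂^ρ_t(b | h_t) = ∑_ν ρ(ν|h_t) k_t(b|ν,h_t)`. -/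
def predictive (k : ∀ t : Fin T, Θ → ((Fin ((t : ℕ) + 1) → 𝒳) × (Fin (t : ℕ) → 𝒴)) → 𝒴 → ℝ)
    (ρ : Θ → ℝ) (t : Fin T) (x : Fin T → 𝒳) (y : Fin T → 𝒴) (b : 𝒴) : ℝ :=
  ∑ ν, post k ρ t x y ν * k t ν (hist t x y) b

/-- Likelihood of a full trajectory `(x,y)` given parameter `ν`. -/
def lik (q : ∀ t : Fin T, ((Fin (t : ℕ) → 𝒳) × (Fin (t : ℕ) → 𝒴)) → 𝒳 → ℝ)
    (k : ∀ t : Fin T, Θ → ((Fin ((t : ℕ) + 1) → 𝒳) × (Fin (t : ℕ) → 𝒴)) → 𝒴 → ℝ)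
    (ν : Θ) (x : Fin T → 𝒳) (y : Fin T → 𝒴) : ℝ :=
  ∏ t : Fin T, q t (past t x y) (x t) * k t ν (hist t x y) (y t)


set_option maxHeartbeats 1000000 in
lemma sum_update_pi {ι α : Type*} [Fintype ι] [DecidableEq ι] [Fintype α]
    (j : ι) (f : (ι → α) → ℝ) :
    ∑ y : ι → α, ∑ c : α, f (Function.update y j c) = (Fintype.card α : ℝ) * ∑ y, f y := by
  have hinv : Function.Involutive
      (fun p : (ι → α) × α => (Function.update p.1 j p.2, p.1 j)) := by
    rintro ⟨y, c⟩
    simp only [Function.update_idem, Function.update_eq_self, Function.update_self]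
  have h2 : ∑ p : (ι → α) × α, f (Function.update p.1 j p.2) = ∑ p : (ι → α) × α, f p.1 := by
    simpa [Function.Involutive.toPerm] using
      Equiv.sum_comp hinv.toPerm (fun p : (ι → α) × α => f p.1)
  calc ∑ y : ι → α, ∑ c : α, f (Function.update y j c)
      = ∑ p : (ι → α) × α, f (Function.update p.1 j p.2) := (Fintype.sum_prod_type (fun p : (ι → α) × α => f (Function.update p.1 j p.2))).symm
    _ = ∑ p : (ι → α) × α, f p.1 := h2
    _ = ∑ y : ι → α, ∑ _c : α, f y := Fintype.sum_prod_type (fun p : (ι → α) × α => f p.1)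
    _ = (Fintype.card α : ℝ) * ∑ y, f y := by
        simp [Finset.sum_const, nsmul_eq_mul, Finset.mul_sum]

lemma pos_of_mul_pos_nonneg {a b : ℝ} (h : 0 < a * b) (ha : 0 ≤ a) (hb : 0 ≤ b) :
    0 < a ∧ 0 < b := by
  constructor
  · rcases ha.lt_or_eq with h' | h'
    · exact h'
    · exfalso; rw [← h'] at h; simp at h
  · rcases hb.lt_or_eq with h' | h'
    · exact h'
    · exfalso; rw [← h'] at h; simp at h

lemma prod_pos_extract {ι : Type*} {s : Finset ι} {f : ι → ℝ}
    (h : ∀ i ∈ s, 0 ≤ f i) (hp : 0 < ∏ i ∈ s, f i) {i : ι} (hi : i ∈ s) : 0 < f i := by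
  rcases (h i hi).lt_or_eq with h' | h'
  · exact h'
  · exfalso
    rw [Finset.prod_eq_zero hi h'.symm] at hp
    exact lt_irrefl _ hp

lemma sum_pos_extract {ι : Type*} [Fintype ι] {f : ι → ℝ}
    (h : ∀ i, 0 ≤ f i) (hp : 0 < ∑ i, f i) : ∃ i, 0 < f i := by
  by_contra hc
  push_neg at hc
  have : ∑ i, f i = 0 := le_antisymm (Finset.sum_nonpos fun i _ => hc i) (Finset.sum_nonneg fun i _ => h i)
  rw [this] at hp; exact lt_irrefl _ hp

/-- The log-sum inequality. -/
lemma log_sum_ineq {ι : Type*} [Fintype ι] (a b : ι → ℝ)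
    (ha : ∀ i, 0 ≤ a i) (hb : ∀ i, 0 ≤ b i) (hab : ∀ i, b i = 0 → a i = 0) :
    (∑ i, a i) * Real.log ((∑ i, a i) / (∑ i, b i)) ≤ ∑ i, a i * Real.log (a i / b i) := by
  set A := ∑ i, a i with hA
  set B := ∑ i, b i with hB
  have hA0 : 0 ≤ A := Finset.sum_nonneg fun i _ => ha i
  rcases hA0.lt_or_eq with hApos | hAz
  swap
  · -- A = 0
    have hz : ∀ i, a i = 0 := by
      intro i
      have := (Finset.sum_eq_zero_iff_of_nonneg (fun i _ => ha i)).1 hAz.symm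
      exact this i (Finset.mem_univ i)
    rw [← hAz]
    simp only [zero_mul]
    refine Finset.sum_nonneg fun i _ => ?_
    rw [hz i]; simp
  · have hBpos : 0 < B := by
      rcases (Finset.sum_nonneg fun i _ => hb i : (0:ℝ) ≤ B).lt_or_eq with h' | h'
      · exact h'
      · exfalso
        have hbz : ∀ i, b i = 0 := by
          intro i
          have := (Finset.sum_eq_zero_iff_of_nonneg (fun i _ => hb i)).1 h'.symm
          exact this i (Finset.mem_univ i)
        have haz : ∀ i, a i = 0 := fun i => hab i (hbz i)
        have : A = 0 := Finset.sum_eq_zero fun i _ => haz i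
        rw [this] at hApos; exact lt_irrefl _ hApos
    -- termwise bound
    set b' : ι → ℝ := fun i => if a i = 0 then 0 else b i with hb'
    have key : ∀ i, a i - (A / B) * b' i ≤ a i * Real.log (a i / b i) - a i * Real.log (A / B) := by
      intro i
      by_cases hz : a i = 0
      · simp [hz, hb']
      · have hai : 0 < a i := (ha i).lt_of_ne (Ne.symm hz)
        have hbi : 0 < b i := by
          rcases (hb i).lt_or_eq with h' | h'
          · exact h'
          · exact absurd (hab i h'.symm) hz
        have hx : 0 < (b i * A) / (a i * B) := by positivity
        have hlog : Real.log ((b i * A) / (a i * B)) ≤ (b i * A) / (a i * B) - 1 :=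
          Real.log_le_sub_one_of_pos hx
        have hsplit : Real.log ((b i * A) / (a i * B))
            = Real.log (A / B) - Real.log (a i / b i) := by
          rw [Real.log_div (by positivity) (by positivity),
            Real.log_div (ne_of_gt hApos) (ne_of_gt hBpos),
            Real.log_div (ne_of_gt hai) (ne_of_gt hbi),
            Real.log_mul (ne_of_gt hbi) (ne_of_gt hApos),
            Real.log_mul (ne_of_gt hai) (ne_of_gt hBpos)]
          ring
        have h1 : Real.log (A / B) - Real.log (a i / b i) ≤ (b i * A) / (a i * B) - 1 := by
          rw [← hsplit]; exact hlog
        have h2 : a i * (Real.log (A / B) - Real.log (a i / b i))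
            ≤ a i * ((b i * A) / (a i * B) - 1) :=
          mul_le_mul_of_nonneg_left h1 (le_of_lt hai)
        have h3 : a i * ((b i * A) / (a i * B) - 1) = (A / B) * b i - a i := by
          field_simp
        have hb'i : b' i = b i := by simp [hb', hz]
        rw [mul_sub] at h2
        rw [hb'i]
        linarith [h2, h3]
    have hsum : ∑ i, (a i - (A / B) * b' i) ≤ ∑ i, (a i * Real.log (a i / b i) - a i * Real.log (A / B)) :=
      Finset.sum_le_sum fun i _ => key i
    have hb'le : ∑ i, b' i ≤ B := by
      refine Finset.sum_le_sum fun i _ => ?_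
      by_cases hz : a i = 0 <;> simp [hb', hz, hb i]
    have hb'nn : 0 ≤ ∑ i, b' i := Finset.sum_nonneg fun i _ => by
      by_cases hz : a i = 0 <;> simp [hb', hz, hb i]
    have hL : 0 ≤ ∑ i, (a i - (A / B) * b' i) := by
      rw [Finset.sum_sub_distrib, ← Finset.mul_sum]
      have : (A / B) * ∑ i, b' i ≤ (A / B) * B :=
        mul_le_mul_of_nonneg_left hb'le (by positivity)
      have hAB : (A / B) * B = A := by field_simp
      linarith [this, hAB]
    have hR : ∑ i, (a i * Real.log (a i / b i) - a i * Real.log (A / B))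
        = (∑ i, a i * Real.log (a i / b i)) - A * Real.log (A / B) := by
      rw [Finset.sum_sub_distrib, ← Finset.sum_mul]
    linarith [le_trans hL hsum, hR.symm.le]
set_option linter.unusedSectionVars false

/-! ### Auxiliary definitions -/

variable (q : ∀ t : Fin T, ((Fin (t : ℕ) → 𝒳) × (Fin (t : ℕ) → 𝒴)) → 𝒳 → ℝ)
variable (k : ∀ t : Fin T, Θ → ((Fin ((t : ℕ) + 1) → 𝒳) × (Fin (t : ℕ) → 𝒴)) → 𝒴 → ℝ)

/-- Product of the first `j` label kernels. -/
def Lp (j : ℕ) (ν : Θ) (x : Fin T → 𝒳) (y : Fin T → 𝒴) : ℝ :=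
  ∏ s : Fin T, if (s : ℕ) < j then k s ν (hist s x y) (y s) else 1

/-- Product of the first `j` input kernels. -/
def Qp (j : ℕ) (x : Fin T → 𝒳) (y : Fin T → 𝒴) : ℝ :=
  ∏ s : Fin T, if (s : ℕ) < j then q s (past s x y) (x s) else 1

/-- Mixture mass of the first `j` labels under prior `ρ`. -/
def Mm (ρ : Θ → ℝ) (j : ℕ) (x : Fin T → 𝒳) (y : Fin T → 𝒴) : ℝ :=
  ∑ ν, ρ ν * Lp k j ν x y

/-- Unnormalized predictive numerator. -/
def Nb (ρ : Θ → ℝ) (t : Fin T) (x : Fin T → 𝒳) (y : Fin T → 𝒴) (b : 𝒴) : ℝ :=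
  ∑ ν, ρ ν * Lp k (t : ℕ) ν x y * k t ν (hist t x y) b

variable {q} {k}

/-! ### Update (measurability) lemmas -/

lemma hist_update_x {t i : Fin T} (h : (t : ℕ) < (i : ℕ)) (x : Fin T → 𝒳) (y : Fin T → 𝒴)
    (a : 𝒳) : hist t (Function.update x i a) y = hist t x y := by
  unfold hist
  refine congrArg₂ Prod.mk ?_ rfl
  funext j
  refine Function.update_of_ne ?_ a x
  apply Fin.ne_of_val_ne
  simp only [Fin.coe_castLE]
  omega

lemma hist_update_y {t i : Fin T} (h : (t : ℕ) ≤ (i : ℕ)) (x : Fin T → 𝒳) (y : Fin T → 𝒴)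
    (c : 𝒴) : hist t x (Function.update y i c) = hist t x y := by
  unfold hist
  refine congrArg₂ Prod.mk rfl ?_
  funext j
  refine Function.update_of_ne ?_ c y
  apply Fin.ne_of_val_ne
  simp only [Fin.coe_castLE]
  omega

lemma past_update_x {t i : Fin T} (h : (t : ℕ) ≤ (i : ℕ)) (x : Fin T → 𝒳) (y : Fin T → 𝒴)
    (a : 𝒳) : past t (Function.update x i a) y = past t x y := by
  unfold past
  refine congrArg₂ Prod.mk ?_ rfl
  funext j
  refine Function.update_of_ne ?_ a x
  apply Fin.ne_of_val_ne
  simp only [Fin.coe_castLE]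
  omega

lemma past_update_y {t i : Fin T} (h : (t : ℕ) ≤ (i : ℕ)) (x : Fin T → 𝒳) (y : Fin T → 𝒴)
    (c : 𝒴) : past t x (Function.update y i c) = past t x y := by
  unfold past
  refine congrArg₂ Prod.mk rfl ?_
  funext j
  refine Function.update_of_ne ?_ c y
  apply Fin.ne_of_val_ne
  simp only [Fin.coe_castLE]
  omega

lemma Lp_update_x {j : ℕ} {i : Fin T} (h : j ≤ (i : ℕ)) (ν : Θ) (x : Fin T → 𝒳)
    (y : Fin T → 𝒴) (a : 𝒳) : Lp k j ν (Function.update x i a) y = Lp k j ν x y := by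
  unfold Lp
  refine Finset.prod_congr rfl fun s _ => ?_
  split_ifs with hs
  · rw [hist_update_x (lt_of_lt_of_le hs h)]
  · rfl

lemma Lp_update_y {j : ℕ} {i : Fin T} (h : j ≤ (i : ℕ)) (ν : Θ) (x : Fin T → 𝒳)
    (y : Fin T → 𝒴) (c : 𝒴) : Lp k j ν x (Function.update y i c) = Lp k j ν x y := by
  unfold Lp
  refine Finset.prod_congr rfl fun s _ => ?_
  split_ifs with hs
  · rw [hist_update_y (le_of_lt (lt_of_lt_of_le hs h)),
      Function.update_of_ne (Fin.ne_of_val_ne (by omega)) c y]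
  · rfl

lemma Qp_update_x {j : ℕ} {i : Fin T} (h : j ≤ (i : ℕ)) (x : Fin T → 𝒳)
    (y : Fin T → 𝒴) (a : 𝒳) : Qp q j (Function.update x i a) y = Qp q j x y := by
  unfold Qp
  refine Finset.prod_congr rfl fun s _ => ?_
  split_ifs with hs
  · rw [past_update_x (le_of_lt (lt_of_lt_of_le hs h)),
      Function.update_of_ne (Fin.ne_of_val_ne (by omega)) a x]
  · rfl

lemma Qp_update_y {j : ℕ} {i : Fin T} (h : j ≤ (i : ℕ) + 1) (x : Fin T → 𝒳)
    (y : Fin T → 𝒴) (c : 𝒴) : Qp q j x (Function.update y i c) = Qp q j x y := by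
  unfold Qp
  refine Finset.prod_congr rfl fun s _ => ?_
  split_ifs with hs
  · rw [past_update_y (by omega)]
  · rfl

lemma Mm_update_x {ρ : Θ → ℝ} {j : ℕ} {i : Fin T} (h : j ≤ (i : ℕ)) (x : Fin T → 𝒳)
    (y : Fin T → 𝒴) (a : 𝒳) : Mm k ρ j (Function.update x i a) y = Mm k ρ j x y := by
  unfold Mm; exact Finset.sum_congr rfl fun ν _ => by rw [Lp_update_x h]

lemma Mm_update_y {ρ : Θ → ℝ} {j : ℕ} {i : Fin T} (h : j ≤ (i : ℕ)) (x : Fin T → 𝒳)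
    (y : Fin T → 𝒴) (c : 𝒴) : Mm k ρ j x (Function.update y i c) = Mm k ρ j x y := by
  unfold Mm; exact Finset.sum_congr rfl fun ν _ => by rw [Lp_update_y h]

/-! ### Structural identities -/

lemma Lp_zero (ν : Θ) (x : Fin T → 𝒳) (y : Fin T → 𝒴) : Lp k 0 ν x y = 1 := by
  unfold Lp; simp

lemma Lp_succ (t : Fin T) (ν : Θ) (x : Fin T → 𝒳) (y : Fin T → 𝒴) :
    Lp k ((t : ℕ) + 1) ν x y = Lp k (t : ℕ) ν x y * k t ν (hist t x y) (y t) := by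
  unfold Lp
  rw [← Finset.mul_prod_erase Finset.univ
      (fun s : Fin T => if (s : ℕ) < (t : ℕ) + 1 then k s ν (hist s x y) (y s) else 1)
      (Finset.mem_univ t),
    ← Finset.mul_prod_erase Finset.univ
      (fun s : Fin T => if (s : ℕ) < (t : ℕ) then k s ν (hist s x y) (y s) else 1)
      (Finset.mem_univ t)]
  rw [if_pos (Nat.lt_succ_self _), if_neg (lt_irrefl _), one_mul,
    mul_comm (k t ν (hist t x y) (y t))]
  congr 1
  refine Finset.prod_congr rfl fun s hs => ?_
  have hsv : (s : ℕ) ≠ (t : ℕ) := fun hh => (Finset.mem_erase.1 hs).1 (Fin.ext hh)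
  exact if_congr (by omega) rfl rfl

lemma Qp_succ (t : Fin T) (x : Fin T → 𝒳) (y : Fin T → 𝒴) :
    Qp q ((t : ℕ) + 1) x y = Qp q (t : ℕ) x y * q t (past t x y) (x t) := by
  unfold Qp
  rw [← Finset.mul_prod_erase Finset.univ
      (fun s : Fin T => if (s : ℕ) < (t : ℕ) + 1 then q s (past s x y) (x s) else 1)
      (Finset.mem_univ t),
    ← Finset.mul_prod_erase Finset.univ
      (fun s : Fin T => if (s : ℕ) < (t : ℕ) then q s (past s x y) (x s) else 1)
      (Finset.mem_univ t)]
  rw [if_pos (Nat.lt_succ_self _), if_neg (lt_irrefl _), one_mul,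
    mul_comm (q t (past t x y) (x t))]
  congr 1
  refine Finset.prod_congr rfl fun s hs => ?_
  have hsv : (s : ℕ) ≠ (t : ℕ) := fun hh => (Finset.mem_erase.1 hs).1 (Fin.ext hh)
  exact if_congr (by omega) rfl rfl

lemma Qp_zero (x : Fin T → 𝒳) (y : Fin T → 𝒴) : Qp q 0 x y = 1 := by
  unfold Qp; simp

lemma lik_eq (ν : Θ) (x : Fin T → 𝒳) (y : Fin T → 𝒴) :
    lik q k ν x y = Qp q T x y * Lp k T ν x y := by
  unfold lik Qp Lp
  rw [← Finset.prod_mul_distrib]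
  refine Finset.prod_congr rfl fun s _ => ?_
  rw [if_pos s.isLt, if_pos s.isLt]

lemma Mm_succ (ρ : Θ → ℝ) (t : Fin T) (x : Fin T → 𝒳) (y : Fin T → 𝒴) :
    Mm k ρ ((t : ℕ) + 1) x y = Nb k ρ t x y (y t) := by
  unfold Mm Nb
  exact Finset.sum_congr rfl fun ν _ => by rw [Lp_succ]; ring

lemma Mm_succ_update (ρ : Θ → ℝ) (t : Fin T) (x : Fin T → 𝒳) (y : Fin T → 𝒴) (c : 𝒴) :
    Mm k ρ ((t : ℕ) + 1) x (Function.update y t c) = Nb k ρ t x y c := by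
  rw [Mm_succ, Nb]
  unfold Nb
  refine Finset.sum_congr rfl fun ν _ => ?_
  rw [Lp_update_y (le_refl _), hist_update_y (le_refl _), Function.update_self]

lemma Mm_zero (ρ : Θ → ℝ) (hρ : ∑ ν, ρ ν = 1) (x : Fin T → 𝒳) (y : Fin T → 𝒴) :
    Mm k ρ 0 x y = 1 := by
  unfold Mm; simp only [Lp_zero, mul_one]; exact hρ

lemma Nb_sum (hk : ∀ t ν h, (∀ b, 0 ≤ k t ν h b) ∧ ∑ b, k t ν h b = 1)
    (ρ : Θ → ℝ) (t : Fin T) (x : Fin T → 𝒳) (y : Fin T → 𝒴) :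
    ∑ b, Nb k ρ t x y b = Mm k ρ (t : ℕ) x y := by
  unfold Nb Mm
  rw [Finset.sum_comm]
  refine Finset.sum_congr rfl fun ν _ => ?_
  rw [← Finset.mul_sum, (hk t ν (hist t x y)).2, mul_one]

lemma predictive_eq (ρ : Θ → ℝ) (t : Fin T) (x : Fin T → 𝒳) (y : Fin T → 𝒴) (b : 𝒴) :
    predictive k ρ t x y b = Nb k ρ t x y b / Mm k ρ (t : ℕ) x y := by
  unfold predictive post Nb Mm
  rw [Finset.sum_div]
  refine Finset.sum_congr rfl fun ν _ => ?_
  rw [div_mul_eq_mul_div]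
  rfl

/-! ### Nonnegativity -/

lemma Lp_nonneg (hk0 : ∀ t ν h b, 0 ≤ k t ν h b) (j : ℕ) (ν : Θ) (x : Fin T → 𝒳)
    (y : Fin T → 𝒴) : 0 ≤ Lp k j ν x y := by
  refine Finset.prod_nonneg fun s _ => ?_
  split_ifs
  · exact hk0 _ _ _ _
  · exact zero_le_one

lemma Qp_nonneg (hq0 : ∀ t h a, 0 ≤ q t h a) (j : ℕ) (x : Fin T → 𝒳)
    (y : Fin T → 𝒴) : 0 ≤ Qp q j x y := by
  refine Finset.prod_nonneg fun s _ => ?_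
  split_ifs
  · exact hq0 _ _ _
  · exact zero_le_one

lemma Mm_nonneg (hk0 : ∀ t ν h b, 0 ≤ k t ν h b) {ρ : Θ → ℝ} (hρ : ∀ ν, 0 ≤ ρ ν) (j : ℕ)
    (x : Fin T → 𝒳) (y : Fin T → 𝒴) : 0 ≤ Mm k ρ j x y :=
  Finset.sum_nonneg fun ν _ => mul_nonneg (hρ ν) (Lp_nonneg hk0 j ν x y)

lemma Nb_nonneg (hk0 : ∀ t ν h b, 0 ≤ k t ν h b) {ρ : Θ → ℝ} (hρ : ∀ ν, 0 ≤ ρ ν) (t : Fin T)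
    (x : Fin T → 𝒳) (y : Fin T → 𝒴) (b : 𝒴) : 0 ≤ Nb k ρ t x y b :=
  Finset.sum_nonneg fun ν _ =>
    mul_nonneg (mul_nonneg (hρ ν) (Lp_nonneg hk0 _ ν x y)) (hk0 _ _ _ _)

lemma predictive_nonneg (hk0 : ∀ t ν h b, 0 ≤ k t ν h b) {ρ : Θ → ℝ} (hρ : ∀ ν, 0 ≤ ρ ν)
    (t : Fin T) (x : Fin T → 𝒳) (y : Fin T → 𝒴) (b : 𝒴) : 0 ≤ predictive k ρ t x y b := by
  rw [predictive_eq]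
  exact div_nonneg (Nb_nonneg hk0 hρ t x y b) (Mm_nonneg hk0 hρ _ x y)

/-! ### Positivity on the support -/

lemma k_pos_of_lik_pos (hq0 : ∀ t h a, 0 ≤ q t h a) (hk0 : ∀ t ν h b, 0 ≤ k t ν h b)
    {ν : Θ} {x : Fin T → 𝒳} {y : Fin T → 𝒴} (hlik : 0 < lik q k ν x y) (t : Fin T) :
    0 < k t ν (hist t x y) (y t) := by
  unfold lik at hlik
  have hfac : 0 < q t (past t x y) (x t) * k t ν (hist t x y) (y t) :=
    prod_pos_extract (fun s _ => mul_nonneg (hq0 _ _ _) (hk0 _ _ _ _)) hlik (Finset.mem_univ t)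
  exact (pos_of_mul_pos_nonneg hfac (hq0 _ _ _) (hk0 _ _ _ _)).2

lemma Lp_pos_of_lik_pos (hq0 : ∀ t h a, 0 ≤ q t h a) (hk0 : ∀ t ν h b, 0 ≤ k t ν h b)
    {ν : Θ} {x : Fin T → 𝒳} {y : Fin T → 𝒴} (hlik : 0 < lik q k ν x y) (j : ℕ) :
    0 < Lp k j ν x y := by
  refine Finset.prod_pos fun s _ => ?_
  split_ifs
  · exact k_pos_of_lik_pos hq0 hk0 hlik s
  · exact zero_lt_one

lemma Mm_pos (hk0 : ∀ t ν h b, 0 ≤ k t ν h b) {ρ : Θ → ℝ} (hρ : ∀ ν, 0 ≤ ρ ν) {ν : Θ}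
    (hν : 0 < ρ ν) {j : ℕ} {x : Fin T → 𝒳} {y : Fin T → 𝒴} (hL : 0 < Lp k j ν x y) :
    0 < Mm k ρ j x y :=
  lt_of_lt_of_le (mul_pos hν hL)
    (Finset.single_le_sum (fun ν' _ => mul_nonneg (hρ ν') (Lp_nonneg hk0 j ν' x y))
      (Finset.mem_univ ν))

/-! ### Marginalization (peeling) -/

lemma peel_step [Nonempty 𝒳] [Nonempty 𝒴]
    (hq : ∀ t h, (∀ a, 0 ≤ q t h a) ∧ ∑ a, q t h a = 1)
    (hk : ∀ t ν h, (∀ b, 0 ≤ k t ν h b) ∧ ∑ b, k t ν h b = 1)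
    (i : Fin T) (ν : Θ) (F : (Fin T → 𝒳) → (Fin T → 𝒴) → ℝ)
    (hFx : ∀ x y a, F (Function.update x i a) y = F x y)
    (hFy : ∀ x y c, F x (Function.update y i c) = F x y) :
    (Fintype.card 𝒳 : ℝ) * ((Fintype.card 𝒴 : ℝ) *
      ∑ x, ∑ y, Qp q ((i : ℕ) + 1) x y * Lp k ((i : ℕ) + 1) ν x y * F x y)
    = ∑ x, ∑ y, Qp q (i : ℕ) x y * Lp k (i : ℕ) ν x y * F x y := by
  have step1 : ∀ x : Fin T → 𝒳,
      (Fintype.card 𝒴 : ℝ) * ∑ y, Qp q ((i : ℕ) + 1) x y * Lp k ((i : ℕ) + 1) ν x y * F x y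
      = ∑ y, Qp q ((i : ℕ) + 1) x y * Lp k (i : ℕ) ν x y * F x y := by
    intro x
    rw [← sum_update_pi i (fun y => Qp q ((i : ℕ) + 1) x y * Lp k ((i : ℕ) + 1) ν x y * F x y)]
    refine Finset.sum_congr rfl fun y _ => ?_
    have hupd : ∀ c, Qp q ((i : ℕ) + 1) x (Function.update y i c)
        * Lp k ((i : ℕ) + 1) ν x (Function.update y i c) * F x (Function.update y i c)
        = Qp q ((i : ℕ) + 1) x y * (Lp k (i : ℕ) ν x y * k i ν (hist i x y) c) * F x y := by
      intro c
      rw [Qp_update_y (le_refl _), hFy, Lp_succ, Lp_update_y (le_refl _),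
        hist_update_y (le_refl _), Function.update_self]
    calc ∑ c, Qp q ((i : ℕ) + 1) x (Function.update y i c)
          * Lp k ((i : ℕ) + 1) ν x (Function.update y i c) * F x (Function.update y i c)
        = ∑ c, Qp q ((i : ℕ) + 1) x y * (Lp k (i : ℕ) ν x y * k i ν (hist i x y) c) * F x y :=
          Finset.sum_congr rfl fun c _ => hupd c
      _ = Qp q ((i : ℕ) + 1) x y * Lp k (i : ℕ) ν x y * F x y := by
          rw [← Finset.sum_mul, ← Finset.mul_sum, ← Finset.mul_sum, (hk i ν (hist i x y)).2]
          ring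
  have step2 :
      (Fintype.card 𝒳 : ℝ) * ∑ x, ∑ y, Qp q ((i : ℕ) + 1) x y * Lp k (i : ℕ) ν x y * F x y
      = ∑ x, ∑ y, Qp q (i : ℕ) x y * Lp k (i : ℕ) ν x y * F x y := by
    rw [← sum_update_pi i (fun x => ∑ y, Qp q ((i : ℕ) + 1) x y * Lp k (i : ℕ) ν x y * F x y)]
    refine Finset.sum_congr rfl fun x _ => ?_
    have hupd : ∀ a y, Qp q ((i : ℕ) + 1) (Function.update x i a) y
        * Lp k (i : ℕ) ν (Function.update x i a) y * F (Function.update x i a) y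
        = Qp q (i : ℕ) x y * Lp k (i : ℕ) ν x y * F x y * q i (past i x y) a := by
      intro a y
      rw [Qp_succ, Qp_update_x (le_refl _), past_update_x (le_refl _), Function.update_self,
        Lp_update_x (le_refl _), hFx]
      ring
    calc ∑ a, ∑ y, Qp q ((i : ℕ) + 1) (Function.update x i a) y
          * Lp k (i : ℕ) ν (Function.update x i a) y * F (Function.update x i a) y
        = ∑ a, ∑ y, Qp q (i : ℕ) x y * Lp k (i : ℕ) ν x y * F x y * q i (past i x y) a :=
          Finset.sum_congr rfl fun a _ => Finset.sum_congr rfl fun y _ => hupd a y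
      _ = ∑ y, ∑ a, Qp q (i : ℕ) x y * Lp k (i : ℕ) ν x y * F x y * q i (past i x y) a :=
          Finset.sum_comm
      _ = ∑ y, Qp q (i : ℕ) x y * Lp k (i : ℕ) ν x y * F x y := by
          refine Finset.sum_congr rfl fun y _ => ?_
          rw [← Finset.mul_sum, (hq i (past i x y)).2, mul_one]
  calc (Fintype.card 𝒳 : ℝ) * ((Fintype.card 𝒴 : ℝ) *
        ∑ x, ∑ y, Qp q ((i : ℕ) + 1) x y * Lp k ((i : ℕ) + 1) ν x y * F x y)
      = (Fintype.card 𝒳 : ℝ) *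
        ∑ x, (Fintype.card 𝒴 : ℝ) * ∑ y, Qp q ((i : ℕ) + 1) x y * Lp k ((i : ℕ) + 1) ν x y * F x y := by
        rw [Finset.mul_sum]
    _ = (Fintype.card 𝒳 : ℝ) * ∑ x, ∑ y, Qp q ((i : ℕ) + 1) x y * Lp k (i : ℕ) ν x y * F x y := by
        rw [Finset.sum_congr rfl fun x _ => step1 x]
    _ = ∑ x, ∑ y, Qp q (i : ℕ) x y * Lp k (i : ℕ) ν x y * F x y := step2

lemma peel_iter [Nonempty 𝒳] [Nonempty 𝒴]
    (hq : ∀ t h, (∀ a, 0 ≤ q t h a) ∧ ∑ a, q t h a = 1)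
    (hk : ∀ t ν h, (∀ b, 0 ≤ k t ν h b) ∧ ∑ b, k t ν h b = 1)
    (ν : Θ) (F : (Fin T → 𝒳) → (Fin T → 𝒴) → ℝ) :
    ∀ (d j : ℕ), j + d = T →
    (∀ i : Fin T, j ≤ (i : ℕ) →
      (∀ x y a, F (Function.update x i a) y = F x y) ∧
      (∀ x y c, F x (Function.update y i c) = F x y)) →
    ((Fintype.card 𝒳 : ℝ) * (Fintype.card 𝒴 : ℝ)) ^ d *
      ∑ x, ∑ y, Qp q T x y * Lp k T ν x y * F x y
    = ∑ x, ∑ y, Qp q j x y * Lp k j ν x y * F x y := by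
  intro d
  induction d with
  | zero =>
    intro j hj _
    have hjT : j = T := by omega
    subst hjT
    rw [pow_zero, one_mul]
  | succ d ih =>
    intro j hj hF
    have hjT : j < T := by omega
    set i : Fin T := ⟨j, hjT⟩ with hi
    have hIH := ih (j + 1) (by omega) (fun i' hi' => hF i' (by omega))
    have hstep := peel_step hq hk i ν F (hF i (le_refl j)).1 (hF i (le_refl j)).2
    have hiv : (i : ℕ) = j := rfl
    rw [hiv] at hstep
    calc ((Fintype.card 𝒳 : ℝ) * (Fintype.card 𝒴 : ℝ)) ^ (d + 1) *
          ∑ x, ∑ y, Qp q T x y * Lp k T ν x y * F x y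
        = (Fintype.card 𝒳 : ℝ) * ((Fintype.card 𝒴 : ℝ) *
            (((Fintype.card 𝒳 : ℝ) * (Fintype.card 𝒴 : ℝ)) ^ d *
              ∑ x, ∑ y, Qp q T x y * Lp k T ν x y * F x y)) := by ring
      _ = (Fintype.card 𝒳 : ℝ) * ((Fintype.card 𝒴 : ℝ) *
            ∑ x, ∑ y, Qp q (j + 1) x y * Lp k (j + 1) ν x y * F x y) := by rw [hIH]
      _ = ∑ x, ∑ y, Qp q j x y * Lp k j ν x y * F x y := hstep

lemma lik_mass [Nonempty 𝒳] [Nonempty 𝒴]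
    (hq : ∀ t h, (∀ a, 0 ≤ q t h a) ∧ ∑ a, q t h a = 1)
    (hk : ∀ t ν h, (∀ b, 0 ≤ k t ν h b) ∧ ∑ b, k t ν h b = 1)
    (ν : Θ) : ∑ x : Fin T → 𝒳, ∑ y : Fin T → 𝒴, Qp q T x y * Lp k T ν x y = 1 := by
  have h := peel_iter hq hk ν (fun _ _ => (1 : ℝ)) T 0 (by omega)
    (fun i _ => ⟨fun _ _ _ => rfl, fun _ _ _ => rfl⟩)
  simp only [mul_one, Qp_zero, Lp_zero, one_mul] at h
  have hcard : ∑ x : Fin T → 𝒳, ∑ _y : Fin T → 𝒴, (1 : ℝ)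
      = ((Fintype.card 𝒳 : ℝ) * (Fintype.card 𝒴 : ℝ)) ^ T := by
    simp [Finset.sum_const, Fintype.card_fun, mul_pow]
  rw [hcard] at h
  have hpos : (0 : ℝ) < ((Fintype.card 𝒳 : ℝ) * (Fintype.card 𝒴 : ℝ)) ^ T := by
    have h1 : (0 : ℝ) < Fintype.card 𝒳 := by exact_mod_cast Fintype.card_pos
    have h2 : (0 : ℝ) < Fintype.card 𝒴 := by exact_mod_cast Fintype.card_pos
    positivity
  refine mul_left_cancel₀ (ne_of_gt hpos) ?_
  rw [h, mul_one]

/-! ### Per-step KL and log-ratio increments -/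

variable (k)

/-- One-step conditional KL between the two posterior predictives. -/
def klr (π πt : Θ → ℝ) (t : Fin T) (x : Fin T → 𝒳) (y : Fin T → 𝒴) : ℝ :=
  ∑ b, predictive k π t x y b * Real.log (predictive k π t x y b / predictive k πt t x y b)

/-- One-step increment of the log likelihood-ratio of the mixtures. -/
def ell (π πt : Θ → ℝ) (t : Fin T) (x : Fin T → 𝒳) (y : Fin T → 𝒴) : ℝ :=
  (Real.log (Mm k π ((t : ℕ) + 1) x y) - Real.log (Mm k π (t : ℕ) x y))
    - (Real.log (Mm k πt ((t : ℕ) + 1) x y) - Real.log (Mm k πt (t : ℕ) x y))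

/-- The term appearing after summing out the coordinate `y t`. -/
def ellTerm (π πt : Θ → ℝ) (t : Fin T) (x : Fin T → 𝒳) (y : Fin T → 𝒴) (c : 𝒴) : ℝ :=
  (Real.log (Nb k π t x y c) - Real.log (Mm k π (t : ℕ) x y))
    - (Real.log (Nb k πt t x y c) - Real.log (Mm k πt (t : ℕ) x y))

variable {k}

lemma Nb_update_x {ρ : Θ → ℝ} {t i : Fin T} (h : (t : ℕ) < (i : ℕ)) (x : Fin T → 𝒳)
    (y : Fin T → 𝒴) (a : 𝒳) (b : 𝒴) :
    Nb k ρ t (Function.update x i a) y b = Nb k ρ t x y b := by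
  unfold Nb
  exact Finset.sum_congr rfl fun ν _ => by rw [Lp_update_x (le_of_lt h), hist_update_x h]

lemma Nb_update_y {ρ : Θ → ℝ} {t i : Fin T} (h : (t : ℕ) ≤ (i : ℕ)) (x : Fin T → 𝒳)
    (y : Fin T → 𝒴) (c : 𝒴) (b : 𝒴) :
    Nb k ρ t x (Function.update y i c) b = Nb k ρ t x y b := by
  unfold Nb
  exact Finset.sum_congr rfl fun ν _ => by rw [Lp_update_y h, hist_update_y h]

lemma predictive_update_x {ρ : Θ → ℝ} {t i : Fin T} (h : (t : ℕ) < (i : ℕ)) (x : Fin T → 𝒳)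
    (y : Fin T → 𝒴) (a : 𝒳) (b : 𝒴) :
    predictive k ρ t (Function.update x i a) y b = predictive k ρ t x y b := by
  rw [predictive_eq, predictive_eq, Nb_update_x h, Mm_update_x (le_of_lt h)]

lemma predictive_update_y {ρ : Θ → ℝ} {t i : Fin T} (h : (t : ℕ) ≤ (i : ℕ)) (x : Fin T → 𝒳)
    (y : Fin T → 𝒴) (c : 𝒴) (b : 𝒴) :
    predictive k ρ t x (Function.update y i c) b = predictive k ρ t x y b := by
  rw [predictive_eq, predictive_eq, Nb_update_y h, Mm_update_y h]

lemma klr_update_x {π πt : Θ → ℝ} {t i : Fin T} (h : (t : ℕ) < (i : ℕ)) (x : Fin T → 𝒳)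
    (y : Fin T → 𝒴) (a : 𝒳) : klr k π πt t (Function.update x i a) y = klr k π πt t x y := by
  unfold klr
  exact Finset.sum_congr rfl fun b _ => by rw [predictive_update_x h, predictive_update_x h]

lemma klr_update_y {π πt : Θ → ℝ} {t i : Fin T} (h : (t : ℕ) ≤ (i : ℕ)) (x : Fin T → 𝒳)
    (y : Fin T → 𝒴) (c : 𝒴) : klr k π πt t x (Function.update y i c) = klr k π πt t x y := by
  unfold klr
  exact Finset.sum_congr rfl fun b _ => by rw [predictive_update_y h, predictive_update_y h]

lemma ell_update_x {π πt : Θ → ℝ} {t i : Fin T} (h : (t : ℕ) + 1 ≤ (i : ℕ)) (x : Fin T → 𝒳)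
    (y : Fin T → 𝒴) (a : 𝒳) : ell k π πt t (Function.update x i a) y = ell k π πt t x y := by
  unfold ell
  rw [Mm_update_x h, Mm_update_x h, Mm_update_x (by omega), Mm_update_x (by omega)]

lemma ell_update_y {π πt : Θ → ℝ} {t i : Fin T} (h : (t : ℕ) + 1 ≤ (i : ℕ)) (x : Fin T → 𝒳)
    (y : Fin T → 𝒴) (c : 𝒴) : ell k π πt t x (Function.update y i c) = ell k π πt t x y := by
  unfold ell
  rw [Mm_update_y h, Mm_update_y h, Mm_update_y (by omega), Mm_update_y (by omega)]

lemma ell_update_yt {π πt : Θ → ℝ} (t : Fin T) (x : Fin T → 𝒳) (y : Fin T → 𝒴) (c : 𝒴) :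
    ell k π πt t x (Function.update y t c) = ellTerm k π πt t x y c := by
  unfold ell ellTerm
  rw [Mm_succ_update, Mm_succ_update, Mm_update_y (le_refl _), Mm_update_y (le_refl _)]

/-- Pointwise tower identity: averaging the log-ratio increments of the next label against
the (unnormalized) predictive gives the one-step conditional KL. -/
lemma tower_pointwise (hk : ∀ t ν h, (∀ b, 0 ≤ k t ν h b) ∧ ∑ b, k t ν h b = 1)
    {π πt : Θ → ℝ} (hπ0 : ∀ ν, 0 ≤ π ν) (hπt0 : ∀ ν, 0 ≤ πt ν)
    (hac : ∀ ν, 0 < π ν → 0 < πt ν) (t : Fin T) (x : Fin T → 𝒳) (y : Fin T → 𝒴) :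
    ∑ c, Nb k π t x y c * ellTerm k π πt t x y c
      = Mm k π (t : ℕ) x y * klr k π πt t x y := by
  have hk0 : ∀ t ν h b, 0 ≤ k t ν h b := fun t ν h b => (hk t ν h).1 b
  unfold klr
  rw [Finset.mul_sum]
  refine Finset.sum_congr rfl fun c _ => ?_
  rw [predictive_eq, predictive_eq]
  by_cases hM : Mm k π (t : ℕ) x y = 0
  · have hterm : ∀ ν, π ν * Lp k (t : ℕ) ν x y = 0 := by
      intro ν
      have := (Finset.sum_eq_zero_iff_of_nonneg
        (fun ν _ => mul_nonneg (hπ0 ν) (Lp_nonneg hk0 _ ν x y))).1 hM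
      exact this ν (Finset.mem_univ ν)
    have hN : Nb k π t x y c = 0 := by
      unfold Nb
      exact Finset.sum_eq_zero fun ν _ => by rw [hterm ν, zero_mul]
    rw [hN, hM]
    simp
  · have hMpos : 0 < Mm k π (t : ℕ) x y :=
      (Mm_nonneg hk0 hπ0 _ x y).lt_of_ne (Ne.symm hM)
    by_cases hN : Nb k π t x y c = 0
    · rw [hN]
      simp
    · have hNpos : 0 < Nb k π t x y c :=
        (Nb_nonneg hk0 hπ0 t x y c).lt_of_ne (Ne.symm hN)
      obtain ⟨ν, hν⟩ := sum_pos_extract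
        (fun ν => mul_nonneg (mul_nonneg (hπ0 ν) (Lp_nonneg hk0 _ ν x y)) (hk0 _ _ _ _)) hNpos
      have h1 := pos_of_mul_pos_nonneg hν
        (mul_nonneg (hπ0 ν) (Lp_nonneg hk0 _ ν x y)) (hk0 _ _ _ _)
      have h2 := pos_of_mul_pos_nonneg h1.1 (hπ0 ν) (Lp_nonneg hk0 _ ν x y)
      have hπtν : 0 < πt ν := hac ν h2.1
      have hNtpos : 0 < Nb k πt t x y c := by
        unfold Nb
        refine lt_of_lt_of_le (mul_pos (mul_pos hπtν h2.2) h1.2) ?_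
        exact Finset.single_le_sum
          (f := fun ν' => πt ν' * Lp k (t : ℕ) ν' x y * k t ν' (hist t x y) c)
          (fun ν' _ =>
          mul_nonneg (mul_nonneg (hπt0 ν') (Lp_nonneg hk0 _ ν' x y)) (hk0 _ _ _ _))
          (Finset.mem_univ ν)
      have hMtpos : 0 < Mm k πt (t : ℕ) x y := Mm_pos hk0 hπt0 hπtν h2.2
      unfold ellTerm
      rw [Real.log_div (ne_of_gt (div_pos hNpos hMpos)) (ne_of_gt (div_pos hNtpos hMtpos)),
        Real.log_div (ne_of_gt hNpos) (ne_of_gt hMpos),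
        Real.log_div (ne_of_gt hNtpos) (ne_of_gt hMtpos)]
      field_simp

/-- Swapping the mixture over `ν` into the trajectory weights. -/
lemma mix_swap (ρ : Θ → ℝ) (j : ℕ) (f : (Fin T → 𝒳) → (Fin T → 𝒴) → ℝ) :
    ∑ ν, ρ ν * ∑ x, ∑ y, Qp q j x y * Lp k j ν x y * f x y
    = ∑ x, ∑ y, Qp q j x y * Mm k ρ j x y * f x y := by
  calc ∑ ν, ρ ν * ∑ x, ∑ y, Qp q j x y * Lp k j ν x y * f x y
      = ∑ ν, ∑ x, ∑ y, ρ ν * (Qp q j x y * Lp k j ν x y * f x y) := by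
        refine Finset.sum_congr rfl fun ν _ => ?_
        rw [Finset.mul_sum]
        exact Finset.sum_congr rfl fun x _ => by rw [Finset.mul_sum]
    _ = ∑ x, ∑ ν, ∑ y, ρ ν * (Qp q j x y * Lp k j ν x y * f x y) := Finset.sum_comm
    _ = ∑ x, ∑ y, ∑ ν, ρ ν * (Qp q j x y * Lp k j ν x y * f x y) :=
        Finset.sum_congr rfl fun x _ => Finset.sum_comm
    _ = ∑ x, ∑ y, Qp q j x y * Mm k ρ j x y * f x y := by
        refine Finset.sum_congr rfl fun x _ => Finset.sum_congr rfl fun y _ => ?_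
        unfold Mm
        rw [Finset.mul_sum, Finset.sum_mul]
        exact Finset.sum_congr rfl fun ν _ => by ring

/-- The tower property: the expected one-step conditional KL equals the expected
one-step log likelihood-ratio increment. -/
lemma step_tower [Nonempty 𝒳] [Nonempty 𝒴]
    (hq : ∀ t h, (∀ a, 0 ≤ q t h a) ∧ ∑ a, q t h a = 1)
    (hk : ∀ t ν h, (∀ b, 0 ≤ k t ν h b) ∧ ∑ b, k t ν h b = 1)
    {π πt : Θ → ℝ} (hπ0 : ∀ ν, 0 ≤ π ν) (hπt0 : ∀ ν, 0 ≤ πt ν)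
    (hac : ∀ ν, 0 < π ν → 0 < πt ν) (t : Fin T) :
    ∑ ν, π ν * ∑ x, ∑ y, Qp q T x y * Lp k T ν x y * klr k π πt t x y
    = ∑ ν, π ν * ∑ x, ∑ y, Qp q T x y * Lp k T ν x y * ell k π πt t x y := by
  have hk0 : ∀ t ν h b, 0 ≤ k t ν h b := fun t ν h b => (hk t ν h).1 b
  -- peel both sides down to time t+1
  have hpeel1 : ∀ ν, ((Fintype.card 𝒳 : ℝ) * (Fintype.card 𝒴 : ℝ)) ^ (T - ((t : ℕ) + 1)) *
      ∑ x, ∑ y, Qp q T x y * Lp k T ν x y * klr k π πt t x y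
      = ∑ x, ∑ y, Qp q ((t : ℕ) + 1) x y * Lp k ((t : ℕ) + 1) ν x y * klr k π πt t x y :=
    fun ν => peel_iter hq hk ν _ (T - ((t : ℕ) + 1)) ((t : ℕ) + 1) (by omega)
      (fun i hi => ⟨fun x y a => klr_update_x (by omega) x y a,
        fun x y c => klr_update_y (by omega) x y c⟩)
  have hpeel2 : ∀ ν, ((Fintype.card 𝒳 : ℝ) * (Fintype.card 𝒴 : ℝ)) ^ (T - ((t : ℕ) + 1)) *
      ∑ x, ∑ y, Qp q T x y * Lp k T ν x y * ell k π πt t x y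
      = ∑ x, ∑ y, Qp q ((t : ℕ) + 1) x y * Lp k ((t : ℕ) + 1) ν x y * ell k π πt t x y :=
    fun ν => peel_iter hq hk ν _ (T - ((t : ℕ) + 1)) ((t : ℕ) + 1) (by omega)
      (fun i hi => ⟨fun x y a => ell_update_x (by omega) x y a,
        fun x y c => ell_update_y (by omega) x y c⟩)
  have hccpos : (0 : ℝ) < ((Fintype.card 𝒳 : ℝ) * (Fintype.card 𝒴 : ℝ)) ^ (T - ((t : ℕ) + 1)) := by
    have h1 : (0 : ℝ) < Fintype.card 𝒳 := by exact_mod_cast Fintype.card_pos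
    have h2 : (0 : ℝ) < Fintype.card 𝒴 := by exact_mod_cast Fintype.card_pos
    positivity
  have hmid : ∑ ν, π ν * ∑ x, ∑ y, Qp q ((t : ℕ) + 1) x y * Lp k ((t : ℕ) + 1) ν x y
        * klr k π πt t x y
      = ∑ ν, π ν * ∑ x, ∑ y, Qp q ((t : ℕ) + 1) x y * Lp k ((t : ℕ) + 1) ν x y
        * ell k π πt t x y := by
    rw [mix_swap, mix_swap]
    refine Finset.sum_congr rfl fun x _ => ?_
    have hcard : (0 : ℝ) < (Fintype.card 𝒴 : ℝ) := by exact_mod_cast Fintype.card_pos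
    refine mul_left_cancel₀ (ne_of_gt hcard) ?_
    rw [← sum_update_pi (ι := Fin T) (α := 𝒴) t
        (fun y => Qp q ((t : ℕ) + 1) x y * Mm k π ((t : ℕ) + 1) x y * klr k π πt t x y),
      ← sum_update_pi (ι := Fin T) (α := 𝒴) t
        (fun y => Qp q ((t : ℕ) + 1) x y * Mm k π ((t : ℕ) + 1) x y * ell k π πt t x y)]
    refine Finset.sum_congr rfl fun y _ => ?_
    have hupd1 : ∀ c, Qp q ((t : ℕ) + 1) x (Function.update y t c)
        * Mm k π ((t : ℕ) + 1) x (Function.update y t c) * klr k π πt t x (Function.update y t c)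
        = Qp q ((t : ℕ) + 1) x y * (Nb k π t x y c * klr k π πt t x y) := by
      intro c
      rw [Qp_update_y (le_refl _), Mm_succ_update, klr_update_y (le_refl _)]
      ring
    have hupd2 : ∀ c, Qp q ((t : ℕ) + 1) x (Function.update y t c)
        * Mm k π ((t : ℕ) + 1) x (Function.update y t c) * ell k π πt t x (Function.update y t c)
        = Qp q ((t : ℕ) + 1) x y * (Nb k π t x y c * ellTerm k π πt t x y c) := by
      intro c
      rw [Qp_update_y (le_refl _), Mm_succ_update, ell_update_yt]
      ring
    calc ∑ c, Qp q ((t : ℕ) + 1) x (Function.update y t c)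
          * Mm k π ((t : ℕ) + 1) x (Function.update y t c) * klr k π πt t x (Function.update y t c)
        = Qp q ((t : ℕ) + 1) x y * ((∑ c, Nb k π t x y c) * klr k π πt t x y) := by
          rw [Finset.sum_congr rfl fun c _ => hupd1 c, ← Finset.mul_sum, ← Finset.sum_mul]
      _ = Qp q ((t : ℕ) + 1) x y * (Mm k π (t : ℕ) x y * klr k π πt t x y) := by
          rw [Nb_sum hk]
      _ = Qp q ((t : ℕ) + 1) x y * ∑ c, Nb k π t x y c * ellTerm k π πt t x y c := by
          rw [tower_pointwise hk hπ0 hπt0 hac]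
      _ = ∑ c, Qp q ((t : ℕ) + 1) x (Function.update y t c)
          * Mm k π ((t : ℕ) + 1) x (Function.update y t c) * ell k π πt t x (Function.update y t c) := by
          rw [Finset.mul_sum]
          exact (Finset.sum_congr rfl fun c _ => (hupd2 c).symm)
  refine mul_left_cancel₀ (ne_of_gt hccpos) ?_
  calc ((Fintype.card 𝒳 : ℝ) * (Fintype.card 𝒴 : ℝ)) ^ (T - ((t : ℕ) + 1)) *
        ∑ ν, π ν * ∑ x, ∑ y, Qp q T x y * Lp k T ν x y * klr k π πt t x y
      = ∑ ν, π ν * (((Fintype.card 𝒳 : ℝ) * (Fintype.card 𝒴 : ℝ)) ^ (T - ((t : ℕ) + 1)) *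
          ∑ x, ∑ y, Qp q T x y * Lp k T ν x y * klr k π πt t x y) := by
        rw [Finset.mul_sum]; exact Finset.sum_congr rfl fun ν _ => by ring
    _ = ∑ ν, π ν * ∑ x, ∑ y, Qp q ((t : ℕ) + 1) x y * Lp k ((t : ℕ) + 1) ν x y
          * klr k π πt t x y := by
        exact Finset.sum_congr rfl fun ν _ => by rw [hpeel1 ν]
    _ = ∑ ν, π ν * ∑ x, ∑ y, Qp q ((t : ℕ) + 1) x y * Lp k ((t : ℕ) + 1) ν x y
          * ell k π πt t x y := hmid
    _ = ∑ ν, π ν * (((Fintype.card 𝒳 : ℝ) * (Fintype.card 𝒴 : ℝ)) ^ (T - ((t : ℕ) + 1)) *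
          ∑ x, ∑ y, Qp q T x y * Lp k T ν x y * ell k π πt t x y) := by
        exact Finset.sum_congr rfl fun ν _ => by rw [hpeel2 ν]
    _ = ((Fintype.card 𝒳 : ℝ) * (Fintype.card 𝒴 : ℝ)) ^ (T - ((t : ℕ) + 1)) *
        ∑ ν, π ν * ∑ x, ∑ y, Qp q T x y * Lp k T ν x y * ell k π πt t x y := by
        rw [Finset.mul_sum]; exact Finset.sum_congr rfl fun ν _ => by ring

/-! ### Telescoping and the final entropy bound -/

lemma telescope {π πt : Θ → ℝ} (hπ1 : ∑ ν, π ν = 1) (hπt1 : ∑ ν, πt ν = 1)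
    (x : Fin T → 𝒳) (y : Fin T → 𝒴) :
    ∑ t : Fin T, ell k π πt t x y
    = Real.log (Mm k π T x y) - Real.log (Mm k πt T x y) := by
  unfold ell
  rw [Finset.sum_sub_distrib]
  have h1 : ∀ (ρ : Θ → ℝ), ∑ ν, ρ ν = 1 →
      ∑ t : Fin T, (Real.log (Mm k ρ ((t : ℕ) + 1) x y) - Real.log (Mm k ρ (t : ℕ) x y))
      = Real.log (Mm k ρ T x y) := by
    intro ρ hρ
    rw [Fin.sum_univ_eq_sum_range
        (fun j => Real.log (Mm k ρ (j + 1) x y) - Real.log (Mm k ρ j x y)) T,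
      Finset.sum_range_sub (fun j => Real.log (Mm k ρ j x y)) T,
      Mm_zero ρ hρ, Real.log_one, sub_zero]
  rw [h1 π hπ1, h1 πt hπt1]

lemma sum_t_swap {π : Θ → ℝ} (g : Fin T → (Fin T → 𝒳) → (Fin T → 𝒴) → ℝ) :
    ∑ t, ∑ ν, π ν * ∑ x, ∑ y, Qp q T x y * Lp k T ν x y * g t x y
    = ∑ ν, π ν * ∑ x, ∑ y, Qp q T x y * Lp k T ν x y * (∑ t, g t x y) := by
  rw [Finset.sum_comm]
  refine Finset.sum_congr rfl fun ν _ => ?_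
  rw [← Finset.mul_sum]
  congr 1
  rw [Finset.sum_comm]
  refine Finset.sum_congr rfl fun x _ => ?_
  rw [Finset.sum_comm]
  refine Finset.sum_congr rfl fun y _ => ?_
  rw [← Finset.mul_sum]

lemma final_ineq [Nonempty 𝒳] [Nonempty 𝒴]
    (hq : ∀ t h, (∀ a, 0 ≤ q t h a) ∧ ∑ a, q t h a = 1)
    (hk : ∀ t ν h, (∀ b, 0 ≤ k t ν h b) ∧ ∑ b, k t ν h b = 1)
    {π πt : Θ → ℝ} (hπ0 : ∀ ν, 0 ≤ π ν) (hπt0 : ∀ ν, 0 ≤ πt ν)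
    (hac : ∀ ν, 0 < π ν → 0 < πt ν) :
    ∑ ν, π ν * ∑ x, ∑ y, Qp q T x y * Lp k T ν x y *
        (Real.log (Mm k π T x y) - Real.log (Mm k πt T x y))
    ≤ ∑ ν, π ν * Real.log (π ν / πt ν) := by
  have hk0 : ∀ t ν h b, 0 ≤ k t ν h b := fun t ν h b => (hk t ν h).1 b
  have hq0 : ∀ t h a, 0 ≤ q t h a := fun t h a => (hq t h).1 a
  rw [mix_swap]
  have key : ∀ x y, Qp q T x y * Mm k π T x y *
        (Real.log (Mm k π T x y) - Real.log (Mm k πt T x y))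
      ≤ ∑ ν, Qp q T x y * (π ν * Lp k T ν x y * Real.log (π ν / πt ν)) := by
    intro x y
    have h0 : Mm k π T x y * (Real.log (Mm k π T x y) - Real.log (Mm k πt T x y))
        ≤ ∑ ν, π ν * Lp k T ν x y * Real.log (π ν / πt ν) := by
      by_cases hM : Mm k π T x y = 0
      · have hz : ∀ ν, π ν * Lp k T ν x y = 0 := by
          intro ν
          exact (Finset.sum_eq_zero_iff_of_nonneg
            (fun ν _ => mul_nonneg (hπ0 ν) (Lp_nonneg hk0 _ ν x y))).1 hM ν (Finset.mem_univ ν)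
        rw [hM, zero_mul]
        refine le_of_eq (Finset.sum_eq_zero fun ν _ => ?_).symm
        rw [hz ν, zero_mul]
      · have hMpos : 0 < Mm k π T x y := (Mm_nonneg hk0 hπ0 _ x y).lt_of_ne (Ne.symm hM)
        obtain ⟨ν1, hν1⟩ := sum_pos_extract
          (fun ν => mul_nonneg (hπ0 ν) (Lp_nonneg hk0 _ ν x y)) hMpos
        have h1 := pos_of_mul_pos_nonneg hν1 (hπ0 ν1) (Lp_nonneg hk0 _ ν1 x y)
        have hMtpos : 0 < Mm k πt T x y := Mm_pos hk0 hπt0 (hac ν1 h1.1) h1.2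
        rw [← Real.log_div (ne_of_gt hMpos) (ne_of_gt hMtpos)]
        have hab : ∀ ν, πt ν * Lp k T ν x y = 0 → π ν * Lp k T ν x y = 0 := by
          intro ν hb
          rcases mul_eq_zero.1 hb with h | h
          · have : π ν = 0 := by
              by_contra hne
              exact absurd h (ne_of_gt (hac ν ((hπ0 ν).lt_of_ne (Ne.symm hne))))
            rw [this, zero_mul]
          · rw [h, mul_zero]
        have hls := log_sum_ineq (fun ν => π ν * Lp k T ν x y)
          (fun ν => πt ν * Lp k T ν x y)
          (fun ν => mul_nonneg (hπ0 ν) (Lp_nonneg hk0 _ ν x y))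
          (fun ν => mul_nonneg (hπt0 ν) (Lp_nonneg hk0 _ ν x y)) hab
        have hrw : ∑ ν, π ν * Lp k T ν x y *
              Real.log ((π ν * Lp k T ν x y) / (πt ν * Lp k T ν x y))
            = ∑ ν, π ν * Lp k T ν x y * Real.log (π ν / πt ν) := by
          refine Finset.sum_congr rfl fun ν _ => ?_
          by_cases hπν : π ν = 0
          · rw [hπν]; ring_nf
          · by_cases hLν : Lp k T ν x y = 0
            · rw [hLν]; ring_nf
            · congr 2
              rw [mul_div_mul_right _ _ hLν]
        calc Mm k π T x y * Real.log (Mm k π T x y / Mm k πt T x y)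
            = (∑ ν, π ν * Lp k T ν x y) *
              Real.log ((∑ ν, π ν * Lp k T ν x y) / (∑ ν, πt ν * Lp k T ν x y)) := rfl
          _ ≤ ∑ ν, π ν * Lp k T ν x y *
              Real.log ((π ν * Lp k T ν x y) / (πt ν * Lp k T ν x y)) := hls
          _ = ∑ ν, π ν * Lp k T ν x y * Real.log (π ν / πt ν) := hrw
    calc Qp q T x y * Mm k π T x y *
          (Real.log (Mm k π T x y) - Real.log (Mm k πt T x y))
        = Qp q T x y * (Mm k π T x y *
            (Real.log (Mm k π T x y) - Real.log (Mm k πt T x y))) := by ring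
      _ ≤ Qp q T x y * ∑ ν, π ν * Lp k T ν x y * Real.log (π ν / πt ν) :=
          mul_le_mul_of_nonneg_left h0 (Qp_nonneg hq0 _ x y)
      _ = ∑ ν, Qp q T x y * (π ν * Lp k T ν x y * Real.log (π ν / πt ν)) := Finset.mul_sum _ _ _
  calc ∑ x, ∑ y, Qp q T x y * Mm k π T x y *
        (Real.log (Mm k π T x y) - Real.log (Mm k πt T x y))
      ≤ ∑ x, ∑ y, ∑ ν, Qp q T x y * (π ν * Lp k T ν x y * Real.log (π ν / πt ν)) :=
        Finset.sum_le_sum fun x _ => Finset.sum_le_sum fun y _ => key x y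
    _ = ∑ x, ∑ ν, ∑ y, Qp q T x y * (π ν * Lp k T ν x y * Real.log (π ν / πt ν)) :=
        Finset.sum_congr rfl fun x _ => Finset.sum_comm
    _ = ∑ ν, ∑ x, ∑ y, Qp q T x y * (π ν * Lp k T ν x y * Real.log (π ν / πt ν)) :=
        Finset.sum_comm
    _ = ∑ ν, π ν * Real.log (π ν / πt ν) := by
        refine Finset.sum_congr rfl fun ν _ => ?_
        calc ∑ x, ∑ y, Qp q T x y * (π ν * Lp k T ν x y * Real.log (π ν / πt ν))
            = ∑ x, ∑ y, (π ν * Real.log (π ν / πt ν)) * (Qp q T x y * Lp k T ν x y) := by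
              refine Finset.sum_congr rfl fun x _ => Finset.sum_congr rfl fun y _ => by ring
          _ = (π ν * Real.log (π ν / πt ν)) * ∑ x, ∑ y, Qp q T x y * Lp k T ν x y := by
              rw [Finset.mul_sum]
              exact Finset.sum_congr rfl fun x _ => by rw [Finset.mul_sum]
          _ = π ν * Real.log (π ν / πt ν) := by rw [lik_mass hq hk ν, mul_one]

/-! ### Properties of the per-term KL on the support -/

lemma lik_nonneg (hq0 : ∀ t h a, 0 ≤ q t h a) (hk0 : ∀ t ν h b, 0 ≤ k t ν h b)
    (ν : Θ) (x : Fin T → 𝒳) (y : Fin T → 𝒴) : 0 ≤ lik q k ν x y :=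
  Finset.prod_nonneg fun s _ => mul_nonneg (hq0 _ _ _) (hk0 _ _ _ _)

lemma predictive_sum (hk : ∀ t ν h, (∀ b, 0 ≤ k t ν h b) ∧ ∑ b, k t ν h b = 1)
    {ρ : Θ → ℝ} (t : Fin T) (x : Fin T → 𝒳) (y : Fin T → 𝒴)
    (hM : Mm k ρ (t : ℕ) x y ≠ 0) : ∑ b, predictive k ρ t x y b = 1 := by
  calc ∑ b, predictive k ρ t x y b = ∑ b, Nb k ρ t x y b / Mm k ρ (t : ℕ) x y :=
        Finset.sum_congr rfl fun b _ => predictive_eq ρ t x y b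
    _ = (∑ b, Nb k ρ t x y b) / Mm k ρ (t : ℕ) x y := by rw [← Finset.sum_div]
    _ = 1 := by rw [Nb_sum hk, div_self hM]

lemma klr_props (hq : ∀ t h, (∀ a, 0 ≤ q t h a) ∧ ∑ a, q t h a = 1)
    (hk : ∀ t ν h, (∀ b, 0 ≤ k t ν h b) ∧ ∑ b, k t ν h b = 1)
    {π πt : Θ → ℝ} (hπ0 : ∀ ν, 0 ≤ π ν) (hπt0 : ∀ ν, 0 ≤ πt ν)
    (hac : ∀ ν, 0 < π ν → 0 < πt ν) {t : Fin T} {ν0 : Θ} {x : Fin T → 𝒳} {y : Fin T → 𝒴}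
    (hw : 0 < π ν0 * lik q k ν0 x y) :
    0 ≤ klr k π πt t x y ∧
    klDivF (predictive k π t x y) (predictive k πt t x y)
      = ENNReal.ofReal (klr k π πt t x y) := by
  have hk0 : ∀ t ν h b, 0 ≤ k t ν h b := fun t ν h b => (hk t ν h).1 b
  have hq0 : ∀ t h a, 0 ≤ q t h a := fun t h a => (hq t h).1 a
  have hh := pos_of_mul_pos_nonneg hw (hπ0 ν0) (lik_nonneg hq0 hk0 ν0 x y)
  have hLp : ∀ j, 0 < Lp k j ν0 x y := Lp_pos_of_lik_pos hq0 hk0 hh.2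
  have hMπ : 0 < Mm k π (t : ℕ) x y := Mm_pos hk0 hπ0 hh.1 (hLp _)
  have hMπt : 0 < Mm k πt (t : ℕ) x y := Mm_pos hk0 hπt0 (hac ν0 hh.1) (hLp _)
  have hAC : ∀ b, predictive k πt t x y b = 0 → predictive k π t x y b = 0 := by
    intro b hb
    rw [predictive_eq] at hb ⊢
    have hNt : Nb k πt t x y b = 0 := by
      rcases div_eq_zero_iff.1 hb with h | h
      · exact h
      · exact absurd h (ne_of_gt hMπt)
    unfold Nb at hNt
    have hterms := (Finset.sum_eq_zero_iff_of_nonneg (fun ν _ =>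
      mul_nonneg (mul_nonneg (hπt0 ν) (Lp_nonneg hk0 _ ν x y)) (hk0 _ _ _ _))).1 hNt
    have hN : Nb k π t x y b = 0 := by
      unfold Nb
      refine Finset.sum_eq_zero fun ν _ => ?_
      by_contra hne
      have hpos : 0 < π ν * Lp k (t : ℕ) ν x y * k t ν (hist t x y) b :=
        (mul_nonneg (mul_nonneg (hπ0 ν) (Lp_nonneg hk0 _ ν x y)) (hk0 _ _ _ _)).lt_of_ne
          (Ne.symm hne)
      have h1 := pos_of_mul_pos_nonneg hpos
        (mul_nonneg (hπ0 ν) (Lp_nonneg hk0 _ ν x y)) (hk0 _ _ _ _)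
      have h2 := pos_of_mul_pos_nonneg h1.1 (hπ0 ν) (Lp_nonneg hk0 _ ν x y)
      have h3 : 0 < πt ν * Lp k (t : ℕ) ν x y * k t ν (hist t x y) b :=
        mul_pos (mul_pos (hac ν h2.1) h2.2) h1.2
      have h4 := hterms ν (Finset.mem_univ ν)
      rw [h4] at h3
      exact lt_irrefl _ h3
    rw [hN, zero_div]
  constructor
  · have hsum1 : ∑ b, predictive k π t x y b = 1 := predictive_sum hk t x y (ne_of_gt hMπ)
    have hsum2 : ∑ b, predictive k πt t x y b = 1 := predictive_sum hk t x y (ne_of_gt hMπt)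
    have hls := log_sum_ineq (fun b => predictive k π t x y b)
      (fun b => predictive k πt t x y b)
      (fun b => predictive_nonneg hk0 hπ0 t x y b)
      (fun b => predictive_nonneg hk0 hπt0 t x y b) hAC
    rw [hsum1, hsum2] at hls
    simpa [klr] using hls
  · unfold klDivF
    rw [if_pos hAC]
    rfl

/-- misspecified prior error bound. -/
theorem statement3 (hT : 1 ≤ T)
    (q : ∀ t : Fin T, ((Fin (t : ℕ) → 𝒳) × (Fin (t : ℕ) → 𝒴)) → 𝒳 → ℝ)
    (k : ∀ t : Fin T, Θ → ((Fin ((t : ℕ) + 1) → 𝒳) × (Fin (t : ℕ) → 𝒴)) → 𝒴 → ℝ)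
    (hq : ∀ t h, (∀ a, 0 ≤ q t h a) ∧ ∑ a, q t h a = 1)
    (hk : ∀ t ν h, (∀ b, 0 ≤ k t ν h b) ∧ ∑ b, k t ν h b = 1)
    (π πt : Θ → ℝ)
    (hπ : (∀ ν, 0 ≤ π ν) ∧ ∑ ν, π ν = 1)
    (hπt : (∀ ν, 0 ≤ πt ν) ∧ ∑ ν, πt ν = 1)
    (hac : ∀ ν, 0 < π ν → 0 < πt ν) :
    (T : ℝ≥0∞)⁻¹ * ∑ t : Fin T, ∑ ν : Θ, ∑ x : Fin T → 𝒳, ∑ y : Fin T → 𝒴,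
        ENNReal.ofReal (π ν * lik q k ν x y) *
          klDivF (predictive k π t x y) (predictive k πt t x y)
      ≤ klDivF π πt / (T : ℝ≥0∞) := by
  have hq0 : ∀ t h a, 0 ≤ q t h a := fun t h a => (hq t h).1 a
  have hk0 : ∀ t ν h b, 0 ≤ k t ν h b := fun t ν h b => (hk t ν h).1 b
  rcases isEmpty_or_nonempty 𝒳 with hX | hX
  · haveI : IsEmpty (Fin T → 𝒳) := isEmpty_pi.2 ⟨⟨0, hT⟩, hX⟩
    have hz : (∑ t : Fin T, ∑ ν : Θ, ∑ x : Fin T → 𝒳, ∑ y : Fin T → 𝒴,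
        ENNReal.ofReal (π ν * lik q k ν x y) *
          klDivF (predictive k π t x y) (predictive k πt t x y)) = 0 :=
      Finset.sum_eq_zero fun t _ => Finset.sum_eq_zero fun ν _ => by
        simp [Finset.univ_eq_empty]
    rw [hz, mul_zero]
    exact zero_le
  rcases isEmpty_or_nonempty 𝒴 with hY | hY
  · haveI : IsEmpty (Fin T → 𝒴) := isEmpty_pi.2 ⟨⟨0, hT⟩, hY⟩
    have hz : (∑ t : Fin T, ∑ ν : Θ, ∑ x : Fin T → 𝒳, ∑ y : Fin T → 𝒴,
        ENNReal.ofReal (π ν * lik q k ν x y) *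
          klDivF (predictive k π t x y) (predictive k πt t x y)) = 0 :=
      Finset.sum_eq_zero fun t _ => Finset.sum_eq_zero fun ν _ => by
        simp [Finset.univ_eq_empty]
    rw [hz, mul_zero]
    exact zero_le
  have hKLr : klDivF π πt = ENNReal.ofReal (∑ ν, π ν * Real.log (π ν / πt ν)) := by
    unfold klDivF
    rw [if_pos]
    intro ν hν
    by_contra hne
    exact absurd hν (ne_of_gt (hac ν ((hπ.1 ν).lt_of_ne (Ne.symm hne))))
  have hterm : ∀ (t : Fin T) (ν : Θ) (x : Fin T → 𝒳) (y : Fin T → 𝒴),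
      ENNReal.ofReal (π ν * lik q k ν x y) *
        klDivF (predictive k π t x y) (predictive k πt t x y)
      = ENNReal.ofReal (π ν * lik q k ν x y * klr k π πt t x y) := by
    intro t ν x y
    by_cases hw : 0 < π ν * lik q k ν x y
    · obtain ⟨hnn, heq⟩ := klr_props hq hk hπ.1 hπt.1 hac (t := t) hw
      rw [heq, ← ENNReal.ofReal_mul (le_of_lt hw)]
    · have hw0 : π ν * lik q k ν x y = 0 :=
        le_antisymm (not_lt.1 hw) (mul_nonneg (hπ.1 ν) (lik_nonneg hq0 hk0 ν x y))
      rw [hw0]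
      simp
  have htermnn : ∀ (t : Fin T) (ν : Θ) (x : Fin T → 𝒳) (y : Fin T → 𝒴),
      0 ≤ π ν * lik q k ν x y * klr k π πt t x y := by
    intro t ν x y
    by_cases hw : 0 < π ν * lik q k ν x y
    · exact mul_nonneg (le_of_lt hw) (klr_props hq hk hπ.1 hπt.1 hac (t := t) hw).1
    · have hw0 : π ν * lik q k ν x y = 0 :=
        le_antisymm (not_lt.1 hw) (mul_nonneg (hπ.1 ν) (lik_nonneg hq0 hk0 ν x y))
      rw [hw0, zero_mul]
  have hof3 : ∀ (f : Θ → (Fin T → 𝒳) → (Fin T → 𝒴) → ℝ), (∀ ν x y, 0 ≤ f ν x y) →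
      ∑ ν, ∑ x, ∑ y, ENNReal.ofReal (f ν x y)
      = ENNReal.ofReal (∑ ν, ∑ x, ∑ y, f ν x y) := by
    intro f hf
    rw [ENNReal.ofReal_sum_of_nonneg
      (fun ν _ => Finset.sum_nonneg fun x _ => Finset.sum_nonneg fun y _ => hf ν x y)]
    refine Finset.sum_congr rfl fun ν _ => ?_
    rw [ENNReal.ofReal_sum_of_nonneg (fun x _ => Finset.sum_nonneg fun y _ => hf ν x y)]
    refine Finset.sum_congr rfl fun x _ => ?_
    rw [ENNReal.ofReal_sum_of_nonneg (fun y _ => hf ν x y)]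
  have hLHS : (∑ t : Fin T, ∑ ν : Θ, ∑ x : Fin T → 𝒳, ∑ y : Fin T → 𝒴,
      ENNReal.ofReal (π ν * lik q k ν x y) *
        klDivF (predictive k π t x y) (predictive k πt t x y))
      = ENNReal.ofReal (∑ t : Fin T, ∑ ν, ∑ x, ∑ y,
          π ν * lik q k ν x y * klr k π πt t x y) := by
    rw [ENNReal.ofReal_sum_of_nonneg (fun t _ => Finset.sum_nonneg fun ν _ =>
      Finset.sum_nonneg fun x _ => Finset.sum_nonneg fun y _ => htermnn t ν x y)]
    refine Finset.sum_congr rfl fun t _ => ?_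
    rw [← hof3 _ (fun ν x y => htermnn t ν x y)]
    exact Finset.sum_congr rfl fun ν _ => Finset.sum_congr rfl fun x _ =>
      Finset.sum_congr rfl fun y _ => hterm t ν x y
  have hreal : (∑ t : Fin T, ∑ ν, ∑ x, ∑ y, π ν * lik q k ν x y * klr k π πt t x y)
      ≤ ∑ ν, π ν * Real.log (π ν / πt ν) := by
    have h1 : (∑ t : Fin T, ∑ ν, ∑ x, ∑ y, π ν * lik q k ν x y * klr k π πt t x y)
        = ∑ t : Fin T, ∑ ν, π ν * ∑ x, ∑ y,
            Qp q T x y * Lp k T ν x y * klr k π πt t x y := by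
      refine Finset.sum_congr rfl fun t _ => Finset.sum_congr rfl fun ν _ => ?_
      rw [Finset.mul_sum]
      refine Finset.sum_congr rfl fun x _ => ?_
      rw [Finset.mul_sum]
      refine Finset.sum_congr rfl fun y _ => ?_
      rw [lik_eq]
      ring
    rw [h1, Finset.sum_congr rfl fun t _ => step_tower hq hk hπ.1 hπt.1 hac t, sum_t_swap]
    calc ∑ ν, π ν * ∑ x, ∑ y, Qp q T x y * Lp k T ν x y * (∑ t, ell k π πt t x y)
        = ∑ ν, π ν * ∑ x, ∑ y, Qp q T x y * Lp k T ν x y *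
            (Real.log (Mm k π T x y) - Real.log (Mm k πt T x y)) := by
          refine Finset.sum_congr rfl fun ν _ => ?_
          congr 1
          refine Finset.sum_congr rfl fun x _ => Finset.sum_congr rfl fun y _ => ?_
          rw [telescope hπ.2 hπt.2]
      _ ≤ ∑ ν, π ν * Real.log (π ν / πt ν) := final_ineq hq hk hπ.1 hπt.1 hac
  rw [hLHS, hKLr, ENNReal.div_eq_inv_mul]
  exact mul_le_mul_right (ENNReal.ofReal_le_ofReal hreal) _
end
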